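/- Fix weighting functions w⁻, w⁺ that are continuously differentiable on [0,1] with strictly positive derivatives. Let A₁, …, A_K be bounded random variables and let a_k⁻ ≤ a_k⁺ be real numbers with [a_k⁻, a_k⁺] contained in the open interval (essinf A_k, esssup A_k) for each k. Let 𝒱 be a set of value functions v for which the maps x ↦ E_{w⁻w⁺}[v(A_k − x)] and x ↦ E_{w⁻w⁺}[v(ξ − x)] are continuous, and define 𝒱_ce := { v ∈ 𝒱 : E_{w⁻w⁺}[v(A_k − a_k⁺)] ≤ 0 and E_{w⁻w⁺}[v(A_k − a_k⁻)] ≥ 0 for all k }. Then for every bounded random variable ξ, sup { ρ_{(v,w⁻,w⁺)}(ξ) : v ∈ 𝒱 with a_k⁻ ≤ ρ_{(v,w⁻,w⁺)}(A_k) ≤ a_k⁺ for all k } = inf { x ∈ ℝ : E_{w⁻w⁺}[v(ξ − x)] ≤ 0 for all v ∈ 𝒱_ce }, as elements of the extended real line. -/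

import Mathlib

open MeasureTheory Set

noncomputable section

/-- A value function: strictly increasing `v : ℝ → ℝ` with `v 0 = 0`. -/
def IsValueFun (v : ℝ → ℝ) : Prop := StrictMono v ∧ v 0 = 0

/-- A weighting function: a strictly increasing `w : [0,1] → [0,1]`
with `w 0 = 0` and `w 1 = 1`. -/
def IsWeightFun (w : ℝ → ℝ) : Prop :=
  StrictMonoOn w (Icc 0 1) ∧ MapsTo w (Icc 0 1) (Icc 0 1) ∧ w 0 = 0 ∧ w 1 = 1

/-- The CPT distorted expectation
`E_{w⁻w⁺}[v(ζ)] = ∫₀^∞ w⁺(ℙ(v(ζ) ≥ t)) dt − ∫₀^∞ w⁻(ℙ(v(ζ) ≤ −t)) dt`. -/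
def cptE {Ω : Type*} [MeasurableSpace Ω] (P : Measure Ω)
    (v wm wp : ℝ → ℝ) (ζ : Ω → ℝ) : ℝ :=
  (∫ t in Ioi (0:ℝ), wp (P {ω | t ≤ v (ζ ω)}).toReal)
    - ∫ t in Ioi (0:ℝ), wm (P {ω | v (ζ ω) ≤ -t}).toReal

/-- Both integrals defining the CPT distorted expectation are finite. -/
def CptWellDef {Ω : Type*} [MeasurableSpace Ω] (P : Measure Ω)
    (v wm wp : ℝ → ℝ) (ζ : Ω → ℝ) : Prop :=
  IntegrableOn (fun t => wp (P {ω | t ≤ v (ζ ω)}).toReal) (Ioi 0) ∧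
    IntegrableOn (fun t => wm (P {ω | v (ζ ω) ≤ -t}).toReal) (Ioi 0)

/-- The generalized shortfall risk measure (GSR-CPT):
`ρ_{(v,w⁻,w⁺)}(ξ) = inf { x : E_{w⁻w⁺}[v(ξ − x)] ≤ 0 }`, with `inf ∅ = +∞`. -/
def gsr {Ω : Type*} [MeasurableSpace Ω] (P : Measure Ω)
    (v wm wp : ℝ → ℝ) (ξ : Ω → ℝ) : EReal :=
  sInf ((fun x : ℝ => (x : EReal)) ''
    {x : ℝ | cptE P v wm wp (fun ω => ξ ω - x) ≤ 0})

/-- A bounded random variable. -/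
def IsBddRV {Ω : Type*} [MeasurableSpace Ω] (ξ : Ω → ℝ) : Prop :=
  Measurable ξ ∧ ∃ M : ℝ, ∀ ω, |ξ ω| ≤ M

/-- A weighting function which is continuously differentiable on `[0,1]`
with strictly positive derivative. -/
def SmoothWeight (w : ℝ → ℝ) : Prop :=
  IsWeightFun w ∧ ContDiffOn ℝ 1 w (Icc 0 1) ∧
    ∀ p ∈ Icc (0:ℝ) 1, 0 < derivWithin w (Icc 0 1) p

namespace CeRobustAux

variable {Ω : Type*} [MeasurableSpace Ω] {P : Measure Ω} [IsProbabilityMeasure P]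
variable {w v wm wp : ℝ → ℝ}

lemma prob_mem_Icc (s : Set Ω) : (P s).toReal ∈ Icc (0:ℝ) 1 :=
  ⟨ENNReal.toReal_nonneg, by
    simpa using ENNReal.toReal_mono ENNReal.one_ne_top (prob_le_one (μ := P) (s := s))⟩

lemma w_mono (hw : IsWeightFun w) {s t : Set Ω} (h : s ⊆ t) :
    w (P s).toReal ≤ w (P t).toReal :=
  hw.1.monotoneOn (prob_mem_Icc s) (prob_mem_Icc t)
    (ENNReal.toReal_mono (measure_ne_top P t) (measure_mono h))

lemma w_nonneg (hw : IsWeightFun w) (s : Set Ω) : 0 ≤ w (P s).toReal :=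
  (hw.2.1 (prob_mem_Icc s)).1

lemma w_le_one (hw : IsWeightFun w) (s : Set Ω) : w (P s).toReal ≤ 1 :=
  (hw.2.1 (prob_mem_Icc s)).2

lemma integrableOn_aux (hw : IsWeightFun w) {f : Ω → ℝ} {B : ℝ} (hb : ∀ ω, f ω ≤ B) :
    IntegrableOn (fun t => w (P {ω | t ≤ f ω}).toReal) (Ioi (0:ℝ)) := by
  set g : ℝ → ℝ := fun t => w (P {ω | t ≤ f ω}).toReal with hg
  have hanti : Antitone g := fun s t hst =>
    w_mono hw (fun ω (h : t ≤ f ω) => hst.trans h)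
  have hzero : ∀ t, B < t → g t = 0 := by
    intro t ht
    have he : {ω | t ≤ f ω} = (∅ : Set Ω) := by
      ext ω
      simp only [mem_setOf_eq, mem_empty_iff_false, iff_false, not_le]
      exact lt_of_le_of_lt (hb ω) ht
    simp [hg, he, hw.2.2.1]
  have hsplit : Ioc (0:ℝ) (max B 0) ∪ Ioi (max B 0) = Ioi 0 :=
    Ioc_union_Ioi_eq_Ioi (le_max_right _ _)
  rw [← hsplit]
  apply IntegrableOn.union
  · refine Measure.integrableOn_of_bounded (M := 1) measure_Ioc_lt_top.ne
      hanti.measurable.aestronglyMeasurable (Filter.Eventually.of_forall fun t => ?_)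
    rw [Real.norm_eq_abs, abs_of_nonneg (w_nonneg hw _)]
    exact w_le_one hw _
  · have he : EqOn g (fun _ => (0:ℝ)) (Ioi (max B 0)) := fun t ht =>
      hzero t (lt_of_le_of_lt (le_max_left B 0) ht)
    exact (integrableOn_congr_fun he measurableSet_Ioi).mpr (integrableOn_zero)

lemma integral_aux_mono (hw : IsWeightFun w) {f g : Ω → ℝ} (hfg : ∀ ω, f ω ≤ g ω)
    {Bf Bg : ℝ} (hbf : ∀ ω, f ω ≤ Bf) (hbg : ∀ ω, g ω ≤ Bg) :
    (∫ t in Ioi (0:ℝ), w (P {ω | t ≤ f ω}).toReal)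
      ≤ ∫ t in Ioi (0:ℝ), w (P {ω | t ≤ g ω}).toReal :=
  setIntegral_mono_on (integrableOn_aux hw hbf) (integrableOn_aux hw hbg) measurableSet_Ioi
    (fun t _ => w_mono hw (fun ω (h : t ≤ f ω) => h.trans (hfg ω)))

lemma cptE_mono (hv : IsValueFun v) (hwm : IsWeightFun wm) (hwp : IsWeightFun wp)
    {ζ₁ ζ₂ : Ω → ℝ} {M₁ M₂ : ℝ} (h₁ : ∀ ω, |ζ₁ ω| ≤ M₁) (h₂ : ∀ ω, |ζ₂ ω| ≤ M₂)
    (h : ∀ ω, ζ₁ ω ≤ ζ₂ ω) :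
    cptE P v wm wp ζ₁ ≤ cptE P v wm wp ζ₂ := by
  have hrw1 : ∀ t : ℝ, {ω | v (ζ₁ ω) ≤ -t} = {ω | t ≤ -v (ζ₁ ω)} := fun t => by
    ext ω; simp only [mem_setOf_eq]; exact le_neg
  have hrw2 : ∀ t : ℝ, {ω | v (ζ₂ ω) ≤ -t} = {ω | t ≤ -v (ζ₂ ω)} := fun t => by
    ext ω; simp only [mem_setOf_eq]; exact le_neg
  simp only [cptE, hrw1, hrw2]
  have hub1 : ∀ ω, v (ζ₁ ω) ≤ v M₁ := fun ω => hv.1.monotone (abs_le.mp (h₁ ω)).2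
  have hub2 : ∀ ω, v (ζ₂ ω) ≤ v M₂ := fun ω => hv.1.monotone (abs_le.mp (h₂ ω)).2
  have hlb1 : ∀ ω, -v (ζ₁ ω) ≤ -v (-M₁) := fun ω =>
    neg_le_neg (hv.1.monotone (abs_le.mp (h₁ ω)).1)
  have hlb2 : ∀ ω, -v (ζ₂ ω) ≤ -v (-M₂) := fun ω =>
    neg_le_neg (hv.1.monotone (abs_le.mp (h₂ ω)).1)
  exact sub_le_sub
    (integral_aux_mono hwp (fun ω => hv.1.monotone (h ω)) hub1 hub2)
    (integral_aux_mono hwm (fun ω => neg_le_neg (hv.1.monotone (h ω))) hlb2 hlb1)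

lemma cptE_nonpos (hv : IsValueFun v) (hwm : IsWeightFun wm) (hwp : IsWeightFun wp)
    {ζ : Ω → ℝ} (hle : ∀ ω, ζ ω ≤ 0) :
    cptE P v wm wp ζ ≤ 0 := by
  have hpos : EqOn (fun t => wp (P {ω | t ≤ v (ζ ω)}).toReal) (fun _ => (0:ℝ)) (Ioi 0) := by
    intro t ht
    have he : {ω | t ≤ v (ζ ω)} = (∅ : Set Ω) := by
      ext ω
      simp only [mem_setOf_eq, mem_empty_iff_false, iff_false, not_le]
      calc v (ζ ω) ≤ v 0 := hv.1.monotone (hle ω)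
        _ = 0 := hv.2
        _ < t := ht
    simp only [he, measure_empty, ENNReal.toReal_zero, hwp.2.2.1]
  have h1 : (∫ t in Ioi (0:ℝ), wp (P {ω | t ≤ v (ζ ω)}).toReal) = 0 := by
    rw [setIntegral_congr_fun measurableSet_Ioi hpos, integral_zero]
  simp only [cptE, h1, zero_sub, neg_nonpos]
  exact setIntegral_nonneg measurableSet_Ioi (fun t _ => w_nonneg hwm _)

lemma cptE_pos (hv : IsValueFun v) (hwm : IsWeightFun wm) (hwp : IsWeightFun wp)
    {ζ : Ω → ℝ} {Mu δ : ℝ} (hub : ∀ ω, ζ ω ≤ Mu) (hδ : 0 < δ) (hge : ∀ ω, δ ≤ v (ζ ω)) :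
    0 < cptE P v wm wp ζ := by
  have hneg : EqOn (fun t => wm (P {ω | v (ζ ω) ≤ -t}).toReal) (fun _ => (0:ℝ)) (Ioi 0) := by
    intro t ht
    have he : {ω | v (ζ ω) ≤ -t} = (∅ : Set Ω) := by
      ext ω
      simp only [mem_setOf_eq, mem_empty_iff_false, iff_false, not_le]
      have : (0:ℝ) < δ := hδ
      calc -t < 0 := by simpa using ht
        _ < δ := hδ
        _ ≤ v (ζ ω) := hge ω
    simp only [he, measure_empty, ENNReal.toReal_zero, hwm.2.2.1]
  have h2 : (∫ t in Ioi (0:ℝ), wm (P {ω | v (ζ ω) ≤ -t}).toReal) = 0 := by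
    rw [setIntegral_congr_fun measurableSet_Ioi hneg, integral_zero]
  have hone : EqOn (fun t => wp (P {ω | t ≤ v (ζ ω)}).toReal) (fun _ => (1:ℝ)) (Ioc 0 δ) := by
    intro t ht
    have he : {ω | t ≤ v (ζ ω)} = (univ : Set Ω) :=
      eq_univ_of_forall fun ω => ht.2.trans (hge ω)
    simp only [he, measure_univ, ENNReal.toReal_one, hwp.2.2.2]
  have hint : IntegrableOn (fun t => wp (P {ω | t ≤ v (ζ ω)}).toReal) (Ioi 0) :=
    integrableOn_aux hwp (fun ω => hv.1.monotone (hub ω))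
  have hsub : (∫ t in Ioc (0:ℝ) δ, wp (P {ω | t ≤ v (ζ ω)}).toReal)
      ≤ ∫ t in Ioi (0:ℝ), wp (P {ω | t ≤ v (ζ ω)}).toReal :=
    setIntegral_mono_set hint (Filter.Eventually.of_forall fun t => w_nonneg hwp _)
      (HasSubset.Subset.eventuallyLE Ioc_subset_Ioi_self)
  have hval : (∫ t in Ioc (0:ℝ) δ, wp (P {ω | t ≤ v (ζ ω)}).toReal) = δ := by
    rw [setIntegral_congr_fun measurableSet_Ioc hone, setIntegral_const]
    simp [Real.volume_Ioc, ENNReal.toReal_ofReal hδ.le, hδ.le]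
  simp only [cptE, h2, sub_zero]
  calc (0:ℝ) < δ := hδ
    _ = ∫ t in Ioc (0:ℝ) δ, wp (P {ω | t ≤ v (ζ ω)}).toReal := hval.symm
    _ ≤ _ := hsub

lemma cptE_strict (hv : IsValueFun v) (hwm : IsWeightFun wm) (hwp : IsWeightFun wp)
    {A : Ω → ℝ} (hAm : Measurable A) {M : ℝ} (hAb : ∀ ω, |A ω| ≤ M)
    {x c : ℝ} (hxc : x < c) (hess : essInf A P < c) :
    cptE P v wm wp (fun ω => A ω - c) < cptE P v wm wp (fun ω => A ω - x) := by
  have habs : ∀ (y : ℝ) (ω : Ω), |A ω - y| ≤ M + |y| := by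
    intro y ω
    have h := abs_le.mp (hAb ω)
    rw [abs_le]
    constructor
    · linarith [le_abs_self y, neg_abs_le y]
    · linarith [le_abs_self y, neg_abs_le y]
  have hmono := cptE_mono (P := P) hv hwm hwp (habs c) (habs x)
      (fun ω => sub_le_sub_left hxc.le (A ω))
  rcases hmono.lt_or_eq with hlt | heq
  · exact hlt
  exfalso
  have hrwc : ∀ t : ℝ, {ω | v (A ω - c) ≤ -t} = {ω | t ≤ -v (A ω - c)} := fun t => by
    ext ω; simp only [mem_setOf_eq]; exact le_neg
  have hrwx : ∀ t : ℝ, {ω | v (A ω - x) ≤ -t} = {ω | t ≤ -v (A ω - x)} := fun t => by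
    ext ω; simp only [mem_setOf_eq]; exact le_neg
  simp only [cptE, hrwc, hrwx] at heq
  have hubc : ∀ ω, v (A ω - c) ≤ v (M + |c|) := fun ω => hv.1.monotone (abs_le.mp (habs c ω)).2
  have hubx : ∀ ω, v (A ω - x) ≤ v (M + |x|) := fun ω => hv.1.monotone (abs_le.mp (habs x ω)).2
  have hlbc : ∀ ω, -v (A ω - c) ≤ -v (-(M + |c|)) := fun ω =>
    neg_le_neg (hv.1.monotone (abs_le.mp (habs c ω)).1)
  have hlbx : ∀ ω, -v (A ω - x) ≤ -v (-(M + |x|)) := fun ω =>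
    neg_le_neg (hv.1.monotone (abs_le.mp (habs x ω)).1)
  have hptle : ∀ ω, -v (A ω - x) ≤ -v (A ω - c) := fun ω =>
    neg_le_neg (hv.1.monotone (sub_le_sub_left hxc.le _))
  have hIp : (∫ t in Ioi (0:ℝ), wp (P {ω | t ≤ v (A ω - c)}).toReal)
      ≤ ∫ t in Ioi (0:ℝ), wp (P {ω | t ≤ v (A ω - x)}).toReal :=
    integral_aux_mono hwp (fun ω => hv.1.monotone (sub_le_sub_left hxc.le _)) hubc hubx
  have hIm : (∫ t in Ioi (0:ℝ), wm (P {ω | t ≤ -v (A ω - x)}).toReal)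
      ≤ ∫ t in Ioi (0:ℝ), wm (P {ω | t ≤ -v (A ω - c)}).toReal :=
    integral_aux_mono hwm hptle hlbx hlbc
  have hintc : IntegrableOn (fun t => wm (P {ω | t ≤ -v (A ω - c)}).toReal) (Ioi 0) :=
    integrableOn_aux hwm hlbc
  have hintx : IntegrableOn (fun t => wm (P {ω | t ≤ -v (A ω - x)}).toReal) (Ioi 0) :=
    integrableOn_aux hwm hlbx
  have hzero : (∫ t in Ioi (0:ℝ),
      (wm (P {ω | t ≤ -v (A ω - c)}).toReal - wm (P {ω | t ≤ -v (A ω - x)}).toReal)) = 0 := by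
    rw [integral_sub hintc hintx]
    linarith
  have haeeq : (fun t => wm (P {ω | t ≤ -v (A ω - c)}).toReal
      - wm (P {ω | t ≤ -v (A ω - x)}).toReal) =ᵐ[volume.restrict (Ioi 0)] 0 := by
    refine (integral_eq_zero_iff_of_nonneg (fun t => ?_) (hintc.sub hintx)).mp hzero
    exact sub_nonneg.mpr (w_mono hwm (fun ω (h : t ≤ -v (A ω - x)) => h.trans (hptle ω)))
  have hpq : (fun t => (P {ω | t ≤ -v (A ω - c)}).toReal)
      =ᵐ[volume.restrict (Ioi 0)] (fun t => (P {ω | t ≤ -v (A ω - x)}).toReal) := by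
    filter_upwards [haeeq] with t ht
    have h0 : wm (P {ω | t ≤ -v (A ω - c)}).toReal
        - wm (P {ω | t ≤ -v (A ω - x)}).toReal = 0 := by simpa using ht
    exact hwm.1.injOn (prob_mem_Icc _) (prob_mem_Icc _) (sub_eq_zero.mp h0)
  set U : Ω → ℝ := fun ω => max (-v (A ω - c)) 0 with hUdef
  set W : Ω → ℝ := fun ω => max (-v (A ω - x)) 0 with hWdef
  have hvmeas : Measurable v := hv.1.monotone.measurable
  have hUmeas : Measurable U :=
    ((hvmeas.comp (hAm.sub measurable_const)).neg).max measurable_const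
  have hWmeas : Measurable W :=
    ((hvmeas.comp (hAm.sub measurable_const)).neg).max measurable_const
  have hUint : Integrable U P := by
    refine (integrable_const (max (-v (-(M + |c|))) 0)).mono'
      hUmeas.aestronglyMeasurable (Filter.Eventually.of_forall fun ω => ?_)
    rw [Real.norm_eq_abs, abs_of_nonneg (le_max_right _ _)]
    exact max_le_max (hlbc ω) le_rfl
  have hWint : Integrable W P := by
    refine (integrable_const (max (-v (-(M + |x|))) 0)).mono'
      hWmeas.aestronglyMeasurable (Filter.Eventually.of_forall fun ω => ?_)
    rw [Real.norm_eq_abs, abs_of_nonneg (le_max_right _ _)]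
    exact max_le_max (hlbx ω) le_rfl
  have hUlayer := hUint.integral_eq_integral_meas_le
    (Filter.Eventually.of_forall fun ω => le_max_right _ _)
  have hWlayer := hWint.integral_eq_integral_meas_le
    (Filter.Eventually.of_forall fun ω => le_max_right _ _)
  have hsetU : EqOn (fun t => (P {a | t ≤ U a}).toReal)
      (fun t => (P {ω | t ≤ -v (A ω - c)}).toReal) (Ioi 0) := by
    intro t ht
    have hts : {a | t ≤ U a} = {ω | t ≤ -v (A ω - c)} := by
      ext ω
      simp only [hUdef, mem_setOf_eq]
      constructor
      · intro h
        rcases le_max_iff.mp h with h | h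
        · exact h
        · exact absurd (lt_of_lt_of_le ht h) (lt_irrefl 0)
      · intro h
        exact h.trans (le_max_left _ _)
    simp only [hts]
  have hsetW : EqOn (fun t => (P {a | t ≤ W a}).toReal)
      (fun t => (P {ω | t ≤ -v (A ω - x)}).toReal) (Ioi 0) := by
    intro t ht
    have hts : {a | t ≤ W a} = {ω | t ≤ -v (A ω - x)} := by
      ext ω
      simp only [hWdef, mem_setOf_eq]
      constructor
      · intro h
        rcases le_max_iff.mp h with h | h
        · exact h
        · exact absurd (lt_of_lt_of_le ht h) (lt_irrefl 0)
      · intro h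
        exact h.trans (le_max_left _ _)
    simp only [hts]
  have hUW : (∫ ω, U ω ∂P) = ∫ ω, W ω ∂P := by
    rw [hUlayer, hWlayer]
    simp only [measureReal_def]
    rw [setIntegral_congr_fun measurableSet_Ioi hsetU,
      setIntegral_congr_fun measurableSet_Ioi hsetW]
    exact integral_congr_ae hpq
  have hWU : ∀ ω, W ω ≤ U ω := fun ω => max_le_max (hptle ω) le_rfl
  have haeUW : (fun ω => U ω - W ω) =ᵐ[P] 0 := by
    refine (integral_eq_zero_iff_of_nonneg (fun ω => sub_nonneg.mpr (hWU ω))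
      (hUint.sub hWint)).mp ?_
    rw [integral_sub hUint hWint]
    linarith
  have hae : ∀ᵐ ω ∂P, c ≤ A ω := by
    filter_upwards [haeUW] with ω hω
    have hUWeq : U ω = W ω := sub_eq_zero.mp (by simpa using hω)
    by_contra hAc
    push_neg at hAc
    have h1 : 0 < -v (A ω - c) := by
      have h2 : v (A ω - c) < v 0 := hv.1 (by linarith)
      rw [hv.2] at h2
      linarith
    have hU : U ω = -v (A ω - c) := max_eq_left h1.le
    have hWpos : 0 < W ω := by rw [← hUWeq, hU]; exact h1
    have h2 : 0 < -v (A ω - x) := by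
      by_contra h3
      push_neg at h3
      have h4 : W ω = 0 := max_eq_right h3
      rw [h4] at hWpos
      exact lt_irrefl 0 hWpos
    have hW : W ω = -v (A ω - x) := max_eq_left h2.le
    have hveq : v (A ω - c) = v (A ω - x) := by
      rw [hU, hW] at hUWeq
      linarith
    have h5 : A ω - c = A ω - x := hv.1.injective hveq
    linarith
  haveI : (ae P).NeBot := ae_neBot.mpr (IsProbabilityMeasure.ne_zero P)
  have hco : Filter.IsCoboundedUnder (· ≥ ·) (ae P) A :=
    Filter.isCoboundedUnder_ge_of_eventually_le (ae P)
      (Filter.Eventually.of_forall fun ω => (abs_le.mp (hAb ω)).2)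
  have hcle : c ≤ essInf A P := Filter.le_liminf_of_le hco hae
  exact absurd hcle (not_le.mpr hess)

lemma sInf_image_coe {S : Set ℝ} (hbdd : BddBelow S) (hmem : sInf S ∈ S) :
    sInf ((fun x : ℝ => (x : EReal)) '' S) = ((sInf S : ℝ) : EReal) :=
  le_antisymm (sInf_le ⟨_, hmem, rfl⟩)
    (le_sInf (by
      rintro y ⟨x, hx, rfl⟩
      exact EReal.coe_le_coe_iff.mpr (csInf_le hbdd hx)))

lemma key (hv : IsValueFun v) (hwm : IsWeightFun wm) (hwp : IsWeightFun wp)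
    {ζ : Ω → ℝ} {M : ℝ} (hb : ∀ ω, |ζ ω| ≤ M)
    (hcont : Continuous fun x : ℝ => cptE P v wm wp (fun ω => ζ ω - x)) :
    ∃ r : ℝ, gsr P v wm wp ζ = (r : EReal) ∧
      cptE P v wm wp (fun ω => ζ ω - r) ≤ 0 ∧
      ∀ x : ℝ, (cptE P v wm wp (fun ω => ζ ω - x) ≤ 0 ↔ r ≤ x) := by
  have habs : ∀ (y : ℝ) (ω : Ω), |ζ ω - y| ≤ M + |y| := by
    intro y ω
    have h := abs_le.mp (hb ω)
    rw [abs_le]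
    constructor
    · linarith [le_abs_self y, neg_abs_le y]
    · linarith [le_abs_self y, neg_abs_le y]
  set S : Set ℝ := {x | cptE P v wm wp (fun ω => ζ ω - x) ≤ 0} with hS
  have hMS : M ∈ S := cptE_nonpos hv hwm hwp (fun ω => by linarith [(abs_le.mp (hb ω)).2])
  have hbdd : BddBelow S := by
    refine ⟨-(M + 1), fun x hx => ?_⟩
    by_contra hlt
    push_neg at hlt
    have hδ : (0:ℝ) < v (-M - x) := by
      have : (0:ℝ) < -M - x := by linarith
      calc (0:ℝ) = v 0 := hv.2.symm
        _ < v (-M - x) := hv.1 this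
    have hpos : 0 < cptE P v wm wp (fun ω => ζ ω - x) :=
      cptE_pos hv hwm hwp (Mu := M - x) (fun ω => by linarith [(abs_le.mp (hb ω)).2]) hδ
        (fun ω => hv.1.monotone (by linarith [(abs_le.mp (hb ω)).1]))
    exact absurd hx (by simp only [hS, mem_setOf_eq]; linarith)
  have hclosed : IsClosed S := isClosed_le hcont continuous_const
  have hmem : sInf S ∈ S := hclosed.csInf_mem ⟨M, hMS⟩ hbdd
  refine ⟨sInf S, sInf_image_coe hbdd hmem, hmem, fun x => ⟨fun hx => csInf_le hbdd hx,
    fun hx => ?_⟩⟩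
  exact le_trans (cptE_mono hv hwm hwp (habs x) (habs (sInf S))
    (fun ω => sub_le_sub_left hx (ζ ω))) hmem

end CeRobustAux

open CeRobustAux in
/-- the worst-case GSR-CPT over value functions in `𝒱`
consistent with the certainty-equivalent bounds equals the robust shortfall
risk computed with the ambiguity set `𝒱_ce`. -/
theorem ce_robust_representation {Ω : Type*} [MeasurableSpace Ω] (P : Measure Ω)
    [IsProbabilityMeasure P]
    (wm wp : ℝ → ℝ) (hwm : SmoothWeight wm) (hwp : SmoothWeight wp)
    (K : ℕ) (A : Fin K → Ω → ℝ) (hA : ∀ k, IsBddRV (A k))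
    (am ap : Fin K → ℝ) (h_le : ∀ k, am k ≤ ap k)
    (h_in : ∀ k, essInf (A k) P < am k ∧ ap k < essSup (A k) P)
    (ξ : Ω → ℝ) (hξ : IsBddRV ξ)
    (V : Set (ℝ → ℝ)) (hV : ∀ v ∈ V, IsValueFun v)
    (hcontA : ∀ v ∈ V, ∀ k, Continuous fun x : ℝ =>
      cptE P v wm wp (fun ω => A k ω - x))
    (hcontξ : ∀ v ∈ V, Continuous fun x : ℝ =>
      cptE P v wm wp (fun ω => ξ ω - x)) :
    (⨆ v ∈ {v ∈ V | ∀ k, (am k : EReal) ≤ gsr P v wm wp (A k) ∧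
          gsr P v wm wp (A k) ≤ (ap k : EReal)},
        gsr P v wm wp ξ)
      = sInf ((fun x : ℝ => (x : EReal)) ''
          {x : ℝ | ∀ v ∈ {v ∈ V |
              ∀ k, cptE P v wm wp (fun ω => A k ω - ap k) ≤ 0 ∧
                0 ≤ cptE P v wm wp (fun ω => A k ω - am k)},
            cptE P v wm wp (fun ω => ξ ω - x) ≤ 0}) := by
  classical
  obtain ⟨hξmeas, Mξ, hMξ⟩ := hξ
  have hsets : {v ∈ V | ∀ k, (am k : EReal) ≤ gsr P v wm wp (A k) ∧
          gsr P v wm wp (A k) ≤ (ap k : EReal)}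
      = {v ∈ V | ∀ k, cptE P v wm wp (fun ω => A k ω - ap k) ≤ 0 ∧
          0 ≤ cptE P v wm wp (fun ω => A k ω - am k)} := by
    ext v
    simp only [mem_setOf_eq]
    refine and_congr_right fun hvV => forall_congr' fun k => ?_
    obtain ⟨hAkm, Mk, hMk⟩ := hA k
    obtain ⟨r, hgsr, hrmem, hchar⟩ := key (P := P) (hV v hvV) hwm.1 hwp.1 hMk (hcontA v hvV k)
    rw [hgsr]
    simp only [EReal.coe_le_coe_iff]
    constructor
    · rintro ⟨ham, hap⟩
      refine ⟨(hchar (ap k)).mpr hap, ?_⟩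
      by_contra hneg
      push_neg at hneg
      have hopen : IsOpen {x : ℝ | cptE P v wm wp (fun ω => A k ω - x) < 0} :=
        isOpen_lt (hcontA v hvV k) continuous_const
      obtain ⟨ε, hε, hball⟩ := Metric.isOpen_iff.mp hopen (am k) hneg
      have hmemball : am k - ε / 2 ∈ Metric.ball (am k) ε := by
        rw [Metric.mem_ball, Real.dist_eq,
          show am k - ε / 2 - am k = -(ε / 2) by ring, abs_neg,
          abs_of_nonneg (by linarith)]
        linarith
      have hle' := (hchar (am k - ε / 2)).mp (le_of_lt (hball hmemball))
      linarith
    · rintro ⟨hap, ham⟩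
      refine ⟨?_, (hchar (ap k)).mp hap⟩
      by_contra hlt
      push_neg at hlt
      have hstrict := cptE_strict (P := P) (hV v hvV) hwm.1 hwp.1 hAkm hMk hlt (h_in k).1
      linarith
  rw [hsets]
  rcases Set.eq_empty_or_nonempty {v ∈ V | ∀ k,
      cptE P v wm wp (fun ω => A k ω - ap k) ≤ 0 ∧
        0 ≤ cptE P v wm wp (fun ω => A k ω - am k)} with hemp | ⟨v₀, hv₀⟩
  · rw [hemp]
    rw [iSup_emptyset]
    symm
    rw [sInf_eq_bot]
    intro b hb
    induction b using EReal.rec with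
    | bot => exact absurd hb (lt_irrefl _)
    | coe c =>
      refine ⟨((c - 1 : ℝ) : EReal), ⟨c - 1, fun v hv => absurd hv (Set.notMem_empty v), rfl⟩, ?_⟩
      exact_mod_cast sub_one_lt c
    | top =>
      exact ⟨((0:ℝ) : EReal), ⟨0, fun v hv => absurd hv (Set.notMem_empty v), rfl⟩,
        EReal.coe_lt_top 0⟩
  · apply le_antisymm
    · refine iSup₂_le fun v hv => ?_
      exact sInf_le_sInf (Set.image_mono (fun x hx => hx v hv))
    · set L := ⨆ v ∈ {v ∈ V | ∀ k,
          cptE P v wm wp (fun ω => A k ω - ap k) ≤ 0 ∧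
            0 ≤ cptE P v wm wp (fun ω => A k ω - am k)}, gsr P v wm wp ξ with hL
      by_contra hcon
      push_neg at hcon
      obtain ⟨hv₀V, hv₀ce⟩ := hv₀
      obtain ⟨r₀, hgsr₀, _, _⟩ := key (P := P) (hV v₀ hv₀V) hwm.1 hwp.1 hMξ (hcontξ v₀ hv₀V)
      have hlow : ((r₀ : ℝ) : EReal) ≤ L := by
        rw [← hgsr₀]
        exact le_iSup₂ (f := fun v _ => gsr P v wm wp ξ) v₀ ⟨hv₀V, hv₀ce⟩
      have h1 : L ≠ ⊥ := fun h => by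
        rw [h] at hlow
        exact absurd hlow (not_le.mpr (EReal.bot_lt_coe r₀))
      have hhigh : sInf ((fun x : ℝ => (x : EReal)) ''
          {x : ℝ | ∀ v ∈ {v ∈ V | ∀ k,
              cptE P v wm wp (fun ω => A k ω - ap k) ≤ 0 ∧
                0 ≤ cptE P v wm wp (fun ω => A k ω - am k)},
            cptE P v wm wp (fun ω => ξ ω - x) ≤ 0}) ≤ ((Mξ : ℝ) : EReal) := by
        refine sInf_le ⟨Mξ, fun v hv => ?_, rfl⟩
        exact cptE_nonpos (hV v hv.1) hwm.1 hwp.1 (fun ω => by linarith [(abs_le.mp (hMξ ω)).2])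
      have h2 : L ≠ ⊤ := by
        intro h
        rw [h] at hcon
        exact absurd (hcon.trans_le hhigh) (not_lt.mpr le_top)
      set c := L.toReal with hc
      have hLc : L = ((c : ℝ) : EReal) := (EReal.coe_toReal h2 h1).symm
      have hcT : Mξ + 0 = Mξ := by ring
      have hcmem : c ∈ {x : ℝ | ∀ v ∈ {v ∈ V | ∀ k,
          cptE P v wm wp (fun ω => A k ω - ap k) ≤ 0 ∧
            0 ≤ cptE P v wm wp (fun ω => A k ω - am k)},
          cptE P v wm wp (fun ω => ξ ω - x) ≤ 0} := by
        intro v hv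
        obtain ⟨r, hgsr, hrmem, hchar⟩ := key (P := P) (hV v hv.1) hwm.1 hwp.1 hMξ
          (hcontξ v hv.1)
        have hrL : ((r : ℝ) : EReal) ≤ L := by
          rw [← hgsr]
          exact le_iSup₂ (f := fun v _ => gsr P v wm wp ξ) v hv
        rw [hLc] at hrL
        exact (hchar c).mpr (EReal.coe_le_coe_iff.mp hrL)
      have hfin : sInf ((fun x : ℝ => (x : EReal)) ''
          {x : ℝ | ∀ v ∈ {v ∈ V | ∀ k,
              cptE P v wm wp (fun ω => A k ω - ap k) ≤ 0 ∧
                0 ≤ cptE P v wm wp (fun ω => A k ω - am k)},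
            cptE P v wm wp (fun ω => ξ ω - x) ≤ 0}) ≤ ((c : ℝ) : EReal) :=
        sInf_le ⟨c, hcmem, rfl⟩
      exact absurd hcon (not_lt.mpr (hfin.trans (le_of_eq hLc.symm)))
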